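/- For every infinite cardinal λ, initial λ-compactness is preserved under taking arbitrary products (i.e., every product of initially λ-compact spaces is initially λ-compact) if and only if there exist a set J and an ultrafilter D on J such that a topological space is initially λ-compact exactly when it is D-compact. -/

import Mathlib

universe u v

open Cardinal

/-- `p` is an `F`-limit point of the sequence `s`. -/
def FLimitPt {I : Type*} {X : Type*} [TopologicalSpace X] (F : Filter I)
    (s : I → X) (p : X) : Prop :=
  ∀ U : Set X, IsOpen U → p ∈ U → {i | s i ∈ U} ∈ F

/-- `X` is `F`-compact: every sequence indexed by the underlying set of `F`
has an `F`-limit point. -/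
def FCompact {I : Type*} (F : Filter I) (X : Type*) [TopologicalSpace X] : Prop :=
  ∀ s : I → X, ∃ p : X, FLimitPt F s p

/-- A space is initially `lam`-compact if every open cover of cardinality at
most `lam` has a finite subcover. -/
def InitiallyCompact (lam : Cardinal.{u}) (X : Type u) [TopologicalSpace X] : Prop :=
  ∀ 𝒰 : Set (Set X), #𝒰 ≤ lam → (∀ U ∈ 𝒰, IsOpen U) → ⋃₀ 𝒰 = Set.univ →
    ∃ 𝒱 ⊆ 𝒰, 𝒱.Finite ∧ ⋃₀ 𝒱 = Set.univ

open Set Filter Topology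

lemma fLimitPt_iff_tendsto {I X : Type*} [TopologicalSpace X] {F : Filter I}
    {s : I → X} {p : X} : FLimitPt F s p ↔ Tendsto s F (𝓝 p) :=
  tendsto_nhds.symm

lemma ic_image {lam : Cardinal.{u}} {X Y : Type u} [TopologicalSpace X]
    [TopologicalSpace Y] {f : X → Y} (hf : Continuous f) (hs : Function.Surjective f)
    (hX : InitiallyCompact lam X) : InitiallyCompact lam Y := by
  intro 𝒱 hcard hopen hcover
  obtain ⟨𝒲, h𝒲sub, h𝒲fin, h𝒲cover⟩ :=
    hX ((f ⁻¹' ·) '' 𝒱) (le_trans mk_image_le hcard)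
      (by rintro _ ⟨V, hV, rfl⟩; exact (hopen V hV).preimage hf)
      (by rw [sUnion_image, ← preimage_sUnion, hcover, preimage_univ])
  refine ⟨{V ∈ 𝒱 | f ⁻¹' V ∈ 𝒲}, fun V hV => hV.1, ?_, ?_⟩
  · have hinj : Function.Injective (fun V : Set Y => f ⁻¹' V) :=
      Set.preimage_injective.mpr hs
    exact (h𝒲fin.preimage hinj.injOn).subset fun V hV => hV.2
  · apply eq_univ_of_forall
    intro y
    obtain ⟨x, rfl⟩ := hs y
    have hx : x ∈ ⋃₀ 𝒲 := h𝒲cover ▸ mem_univ x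
    obtain ⟨W, hW, hxW⟩ := hx
    obtain ⟨V, hV, rfl⟩ := h𝒲sub hW
    exact ⟨V, ⟨hV, hW⟩, hxW⟩

lemma partB {lam : Cardinal.{u}} {α : Type u} (hα : #α = lam)
    (D : Ultrafilter (Finset α)) (hreg : ∀ a : α, {t : Finset α | a ∈ t} ∈ D)
    (X : Type u) [TopologicalSpace X] [Nonempty X] (hX : FCompact (D : Filter (Finset α)) X) :
    InitiallyCompact lam X := by
  intro 𝒰 hcard hopen hcover
  by_contra hno
  push_neg at hno
  obtain ⟨f⟩ := (Cardinal.le_def _ _).mp (show #↥𝒰 ≤ #α by rw [hα]; exact hcard)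
  haveI : Nonempty ↥𝒰 := by
    have hx : Classical.arbitrary X ∈ ⋃₀ 𝒰 := hcover ▸ mem_univ _
    obtain ⟨U, hU, -⟩ := hx
    exact ⟨⟨U, hU⟩⟩
  set g : α → ↥𝒰 := Function.invFun f with hg
  have hgf : ∀ u, g (f u) = u := Function.leftInverse_invFun f.injective
  have hpt : ∀ t : Finset α, ∃ x : X, ∀ a ∈ t, x ∉ (g a : Set X) := by
    intro t
    by_contra hc
    push_neg at hc
    refine hno ((fun a => (g a : Set X)) '' ↑t) ?_ ((t.finite_toSet).image _) ?_
    · rintro _ ⟨a, _, rfl⟩; exact (g a).2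
    · apply eq_univ_of_forall
      intro x
      obtain ⟨a, hat, hxa⟩ := hc x
      exact ⟨(g a : Set X), ⟨a, hat, rfl⟩, hxa⟩
  choose s hs using hpt
  obtain ⟨p, hplim⟩ := hX s
  have hp : p ∈ ⋃₀ 𝒰 := hcover ▸ mem_univ _
  obtain ⟨U, hU𝒰, hpU⟩ := hp
  have h1 : {t | s t ∈ U} ∈ D := hplim U (hopen U hU𝒰) hpU
  have h2 : {t : Finset α | f ⟨U, hU𝒰⟩ ∈ t} ∈ D := hreg _
  obtain ⟨t, ht1, ht2⟩ := Filter.nonempty_of_mem (Filter.inter_mem h1 h2)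
  have := hs t _ ht2
  rw [hgf] at this
  exact this ht1


/-- Canonical topology on `Set (Set J)`, generated by sets `{F | A ∈ F}`. -/
def canTop (J : Type u) : TopologicalSpace (Set (Set J)) :=
  .generateFrom {t | ∃ A : Set J, t = {F : Set (Set J) | A ∈ F}}

/-- Index of all initially `lam`-compact "canonical" subspaces together with a
`J`-indexed sequence in them. -/
structure Idx (lam : Cardinal.{u}) (J : Type u) : Type u where
  carrier : Set (Set (Set J))
  seq : J → Set (Set J)
  mem : ∀ j, seq j ∈ carrier
  nonempty : carrier.Nonempty
  ic : @InitiallyCompact lam ↥carrier (@instTopologicalSpaceSubtype _ _ (canTop J))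

def Fam (lam : Cardinal.{u}) (J : Type u) (i : Idx lam J) : Type u := ↥i.carrier

instance famTop (lam : Cardinal.{u}) (J : Type u) (i : Idx lam J) :
    TopologicalSpace (Fam lam J i) := @instTopologicalSpaceSubtype _ _ (canTop J)

instance famNe (lam : Cardinal.{u}) (J : Type u) (i : Idx lam J) :
    Nonempty (Fam lam J i) := i.nonempty.to_subtype

lemma famIC (lam : Cardinal.{u}) (J : Type u) (i : Idx lam J) :
    InitiallyCompact lam (Fam lam J i) := i.ic

def canSeq {lam : Cardinal.{u}} {J : Type u} (i : Idx lam J) (j : J) : Fam lam J i :=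
  ⟨i.seq j, i.mem j⟩

lemma partA {lam : Cardinal.{u}} {α : Type u} (D : Ultrafilter (Finset α))
    (h : ∀ i : Idx lam (Finset α), ∃ p : Fam lam (Finset α) i,
      FLimitPt (D : Filter (Finset α)) (canSeq i) p)
    (X : Type u) [TopologicalSpace X] [Nonempty X] (hX : InitiallyCompact lam X) :
    FCompact (D : Filter (Finset α)) X := by
  intro s
  let J := Finset α
  set Fil : X → Set (Set J) :=
    fun x => {A | ∃ U : Set X, IsOpen U ∧ x ∈ U ∧ s ⁻¹' U ⊆ A} with hFil
  have hFilCont : Continuous[_, canTop J] Fil := by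
    rw [canTop, continuous_generateFrom_iff]
    rintro _ ⟨A, rfl⟩
    have : Fil ⁻¹' {F | A ∈ F} = ⋃ U ∈ {U : Set X | IsOpen U ∧ s ⁻¹' U ⊆ A}, U := by
      ext x
      simp only [hFil, mem_preimage, mem_setOf_eq, mem_iUnion]
      constructor
      · rintro ⟨U, h1, h2, h3⟩; exact ⟨U, ⟨h1, h3⟩, h2⟩
      · rintro ⟨U, ⟨h1, h3⟩, h2⟩; exact ⟨U, h1, h2, h3⟩
    rw [this]
    exact isOpen_biUnion fun U hU => hU.1
  have hic : @InitiallyCompact lam ↥(range Fil) (@instTopologicalSpaceSubtype _ _ (canTop J)) := by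
    letI := canTop J
    exact ic_image (f := rangeFactorization Fil) (hFilCont.subtype_mk _)
      rangeFactorization_surjective hX
  set i₀ : Idx lam J :=
    ⟨range Fil, fun j => Fil (s j), fun j => ⟨s j, rfl⟩,
      ⟨Fil (Classical.arbitrary X), mem_range_self _⟩, hic⟩ with hi₀
  obtain ⟨p, hplim⟩ := h i₀
  obtain ⟨x, hx⟩ : ∃ x, Fil x = p.1 := p.2
  refine ⟨x, ?_⟩
  intro U hU hxU
  have hopen : IsOpen {F : Fam lam J i₀ | (s ⁻¹' U) ∈ F.1} := by
    have h1 : IsOpen[canTop J] {F : Set (Set J) | (s ⁻¹' U) ∈ F} :=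
      TopologicalSpace.isOpen_generateFrom_of_mem ⟨s ⁻¹' U, rfl⟩
    letI := canTop J
    exact h1.preimage continuous_subtype_val
  have hmemD := hplim _ hopen (by show (s ⁻¹' U) ∈ p.1; rw [← hx]; exact ⟨U, hU, hxU, subset_rfl⟩)
  refine Filter.mem_of_superset hmemD ?_
  intro j hj
  obtain ⟨V, hV, hjV, hsub⟩ := hj
  show _ ∈ _
  exact hsub hjV

lemma forward (lam : Cardinal.{u}) (hlam : ℵ₀ ≤ lam)
    (hprod : ∀ (J : Type u) (X : J → Type u) [∀ j, TopologicalSpace (X j)]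
      [∀ j, Nonempty (X j)],
      (∀ j, InitiallyCompact lam (X j)) → InitiallyCompact lam (∀ j, X j)) :
    ∃ (J : Type u) (D : Ultrafilter J),
      ∀ (X : Type u) [TopologicalSpace X] [Nonempty X],
        (InitiallyCompact lam X ↔ FCompact (D : Filter J) X) := by
  classical
  set α := lam.out with hα
  haveI : Infinite α := Cardinal.infinite_iff.mpr (by rw [mk_out]; exact hlam)
  set J := Finset α with hJ
  set Z := ∀ i : Idx lam J, Fam lam J i with hZ
  have hZic : InitiallyCompact lam Z := hprod _ _ (famIC lam J)
  set σ : J → Z := fun j i => canSeq i j with hσdef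
  set K : Finset α → Set J := fun F => {t | F ⊆ t} with hK
  -- cluster point of the regularizing filter base
  have hcl : ∃ p : Z, ∀ F : Finset α, p ∈ closure (σ '' K F) := by
    by_contra hc
    push_neg at hc
    obtain ⟨𝒱, hsub, hfin, hcov⟩ :=
      hZic (Set.range fun F => (closure (σ '' K F))ᶜ)
        (mk_range_le.trans (by rw [mk_finset_of_infinite, mk_out]))
        (by rintro _ ⟨F, rfl⟩; exact isClosed_closure.isOpen_compl)
        (by
          apply eq_univ_of_forall
          intro z
          obtain ⟨F, hF⟩ := hc z
          exact ⟨_, ⟨F, rfl⟩, hF⟩)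
    have hch : ∀ V ∈ 𝒱, ∃ F, V = (closure (σ '' K F))ᶜ := by
      intro V hV
      obtain ⟨F, hF⟩ := hsub hV
      exact ⟨F, hF.symm⟩
    choose Fo hFo using hch
    set t0 : Finset α :=
      (hfin.toFinset).attach.biUnion (fun V => Fo V.1 (hfin.mem_toFinset.mp V.2)) with ht0
    have hz : σ t0 ∈ ⋃₀ 𝒱 := hcov ▸ mem_univ _
    obtain ⟨V, hV, hzV⟩ := hz
    have hzcl : σ t0 ∈ closure (σ '' K (Fo V hV)) := by
      apply subset_closure
      refine ⟨t0, ?_, rfl⟩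
      intro a ha
      exact Finset.mem_biUnion.mpr
        ⟨⟨V, hfin.mem_toFinset.mpr hV⟩, Finset.mem_attach _ _, ha⟩
    rw [hFo V hV] at hzV
    exact hzV hzcl
  obtain ⟨p, hp⟩ := hcl
  -- the ultrafilter
  have hdir : Directed (· ≥ ·) fun F : Finset α => (𝓟 (K F) : Filter J) := by
    intro F G
    refine ⟨F ∪ G, ?_, ?_⟩ <;>
      · apply principal_mono.mpr
        intro t ht
        simp only [hK, mem_setOf_eq, Finset.union_subset_iff] at ht ⊢
        first | exact ht.1 | exact ht.2
  set L : Filter J := Filter.comap σ (𝓝 p) ⊓ ⨅ F : Finset α, 𝓟 (K F) with hL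
  have hLne : L.NeBot := by
    rw [hL, inf_neBot_iff]
    intro U hU t ht
    obtain ⟨F, hF⟩ := (Filter.mem_iInf_of_directed hdir t).mp ht
    obtain ⟨N, hN, hNs⟩ := hU
    obtain ⟨W, hWN, hWopen, hpW⟩ := mem_nhds_iff.mp hN
    obtain ⟨z, hzW, j, hjK, rfl⟩ := (mem_closure_iff.mp (hp F)) W hWopen hpW
    exact ⟨j, hNs (mem_preimage.mpr (hWN hzW)), hF hjK⟩
  obtain ⟨D, hD⟩ := Ultrafilter.exists_le L
  have hKD : ∀ F : Finset α, K F ∈ D := fun F =>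
    le_principal_iff.mp (hD.trans (inf_le_right.trans (iInf_le _ F)))
  have hσten : Tendsto σ (D : Filter J) (𝓝 p) :=
    (Filter.tendsto_iff_comap).mpr (hD.trans inf_le_left)
  have huniv : ∀ i : Idx lam J, ∃ q : Fam lam J i,
      FLimitPt (D : Filter J) (canSeq i) q := by
    intro i
    refine ⟨p i, ?_⟩
    rw [fLimitPt_iff_tendsto]
    exact tendsto_pi_nhds.mp hσten i
  refine ⟨J, D, ?_⟩
  intro X tX nX
  constructor
  · exact fun hX => partA D huniv X hX
  · exact fun hX => partB (by rw [mk_out]) D (fun a => by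
      simpa only [hK, Finset.singleton_subset_iff] using hKD {a}) X hX

theorem stmt_8 (lam : Cardinal.{u}) (hlam : ℵ₀ ≤ lam) :
    -- initial `lam`-compactness is preserved under arbitrary products
    (∀ (J : Type u) (X : J → Type u) [t : ∀ j, TopologicalSpace (X j)]
        [∀ j, Nonempty (X j)],
        (∀ j, InitiallyCompact lam (X j)) → InitiallyCompact lam (∀ j, X j))
    ↔ -- iff some ultrafilter `D` (over some set `J`) is such that
      -- `D`-compactness is equivalent to initial `lam`-compactness
      ∃ (J : Type u) (D : Ultrafilter J),
        ∀ (X : Type u) [t : TopologicalSpace X] [Nonempty X],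
          (InitiallyCompact lam X ↔ FCompact (D : Filter J) X) := by
  constructor
  · exact fun hprod => forward lam hlam hprod
  · rintro ⟨J, D, h⟩ I X tX nX hIC
    have h1 : ∀ i, FCompact (D : Filter J) (X i) := fun i => (h (X i)).mp (hIC i)
    have h2 : FCompact (D : Filter J) (∀ i, X i) := by
      intro s
      have : ∀ i, ∃ q, FLimitPt (D : Filter J) (fun j => s j i) q := fun i => h1 i _
      choose q hq using this
      refine ⟨q, ?_⟩
      rw [fLimitPt_iff_tendsto]
      exact tendsto_pi_nhds.mpr fun i => fLimitPt_iff_tendsto.mp (hq i)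
    exact (h _).mpr h2
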